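/- Given an n-point metric space (X,d) with ordered points x_1,...,x_n, an increasing function β : ℕ → ℕ, and χ(j) defined as the minimal i with β(i) ≥ j, define sets S_0 = ∅ and S_i = {x_j : j ≤ β(i)}, and define f : X → ℝ^D (D = β(χ(n)) coordinates) by f_j(x) = d(x, S_{χ(j)-1} ∪ {x_j}). Then: (a) f is non-expansive: |f_j(x) - f_j(y)| ≤ d(x,y) for all x,y and all coordinates j; (b) for every pair j < i, ‖f(x_j) - f(x_i)‖_∞ ≥ d(x_j, x_i) / (2·χ(j)); (c) f_{j'}(x_j) = 0 whenever χ(j') > χ(j), so x_j is non-zero only in the first β(χ(j)) coordinates. -/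

import Mathlib

open Metric Set

private lemma exists_big_step (g : ℕ → ℝ) (N : ℕ) (hN : 1 ≤ N) :
    ∃ m < N, (g 0 - g N) / N ≤ g m - g (m + 1) := by
  by_contra h
  push_neg at h
  have hNR : (0:ℝ) < N := by exact_mod_cast hN
  have hsum : ∑ m ∈ Finset.range N, (g m - g (m + 1)) = g 0 - g N :=
    Finset.sum_range_sub' g N
  have hlt : ∑ m ∈ Finset.range N, (g m - g (m + 1))
      < ∑ _m ∈ Finset.range N, (g 0 - g N) / N :=
    Finset.sum_lt_sum_of_nonempty (Finset.nonempty_range_iff.mpr (by omega))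
      (fun m hm => h m (Finset.mem_range.mp hm))
  rw [hsum, Finset.sum_const, Finset.card_range, nsmul_eq_mul] at hlt
  have hcancel : (N : ℝ) * ((g 0 - g N) / N) = g 0 - g N := by
    field_simp
  rw [hcancel] at hlt
  exact lt_irrefl _ hlt

/-- the general prioritized `ℓ_∞`-embedding construction.  Given an
`n`-point metric space with ordered points `x_1, …, x_n`, a monotone `β : ℕ → ℕ`
(with `β` eventually exceeding every `j`), `χ(j)` the minimal `i ≥ 1` with `β(i) ≥ j`,
`S_0 = ∅`, `S_i = {x_j : 1 ≤ j ≤ β(i)}`, and coordinates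
`f_j(x) = d(x, S_{χ(j)-1} ∪ {x_j})`, we have:
(a) every coordinate of `f` is non-expansive;
(b) for `j < i`, some coordinate separates `x_j, x_i` by at least `d(x_j,x_i)/(2 χ(j))`;
(c) `f_{j'}(x_j) = 0` whenever `χ(j') > χ(j)`, i.e. `x_j` is supported on the first
`β(χ(j))` coordinates. -/
theorem stmt4 (X : Type*) [MetricSpace X] (n : ℕ) (x : ℕ → X) (β : ℕ → ℕ)
    (hβmono : Monotone β) (hβsur : ∀ j : ℕ, ∃ i : ℕ, 1 ≤ i ∧ j ≤ β i)
    (χ : ℕ → ℕ) (hχ : ∀ j, χ j = sInf {i : ℕ | 1 ≤ i ∧ j ≤ β i})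
    (S : ℕ → Set X) (hS0 : S 0 = ∅)
    (hS : ∀ i, 1 ≤ i → S i = {p | ∃ j, 1 ≤ j ∧ j ≤ β i ∧ p = x j})
    (f : X → ℕ → ℝ)
    (hf : ∀ y j, 1 ≤ j → f y j = Metric.infDist y (S (χ j - 1) ∪ {x j})) :
    (∀ y z : X, ∀ j, 1 ≤ j → j ≤ n → |f y j - f z j| ≤ dist y z)
    ∧ (∀ j i, 1 ≤ j → j < i → i ≤ n →
        ∃ k, 1 ≤ k ∧ dist (x j) (x i) / (2 * χ j) ≤ |f (x j) k - f (x i) k|)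
    ∧ (∀ j j', 1 ≤ j → j ≤ n → 1 ≤ j' → χ j < χ j' → f (x j) j' = 0) := by
  classical
  -- basic facts about χ
  have hχmem : ∀ j, 1 ≤ χ j ∧ j ≤ β (χ j) := by
    intro j
    have : χ j ∈ {i : ℕ | 1 ≤ i ∧ j ≤ β i} := by
      rw [hχ]
      exact Nat.sInf_mem (let ⟨i, hi⟩ := hβsur j; ⟨i, hi⟩)
    exact this
  have hχle : ∀ j i, 1 ≤ i → j ≤ β i → χ j ≤ i := by
    intro j i h1 h2
    rw [hχ]
    exact Nat.sInf_le ⟨h1, h2⟩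
  -- monotonicity of S
  have hSsub : ∀ a b, a ≤ b → S a ⊆ S b := by
    intro a b hab
    rcases Nat.eq_zero_or_pos a with rfl | ha
    · rw [hS0]; exact empty_subset _
    · have hb : 1 ≤ b := le_trans ha hab
      rw [hS a ha, hS b hb]
      rintro p ⟨k, hk1, hk2, rfl⟩
      exact ⟨k, hk1, hk2.trans (hβmono hab), rfl⟩
  have hxmem : ∀ k i, 1 ≤ k → 1 ≤ i → k ≤ β i → x k ∈ S i := by
    intro k i hk hi hki
    rw [hS i hi]
    exact ⟨k, hk, hki, rfl⟩
  refine ⟨?_, ?_, ?_⟩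
  · -- (a) nonexpansiveness
    intro y z j hj _
    rw [hf y j hj, hf z j hj]
    have h1 := Metric.infDist_le_infDist_add_dist (x := y) (y := z) (s := S (χ j - 1) ∪ {x j})
    have h2 := Metric.infDist_le_infDist_add_dist (x := z) (y := y) (s := S (χ j - 1) ∪ {x j})
    rw [dist_comm z y] at h2
    rw [abs_sub_le_iff]
    constructor <;> linarith
  · -- (b) separation
    intro j i hj hji _hin
    have hχj1 : 1 ≤ χ j := (hχmem j).1
    set Δ : ℝ := dist (x j) (x i) with hΔdef
    rcases eq_or_lt_of_le (dist_nonneg : (0:ℝ) ≤ Δ) with hΔ0 | hΔpos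
    · have hΔz : Δ = 0 := hΔdef.trans hΔ0.symm
      exact ⟨j, hj, by rw [hΔz, zero_div]; exact abs_nonneg _⟩
    set N : ℕ := χ j with hNdef
    set c : ℝ := Δ / (2 * N) with hcdef
    have hNR : (0:ℝ) < N := by exact_mod_cast hχj1
    have hcpos : 0 < c := by
      apply div_pos hΔpos; positivity
    set α : ℕ → ℝ := fun m =>
      min (Metric.infDist (x j) (S m)) (Metric.infDist (x i) (S m)) with hαdef
    set g : ℕ → ℝ := fun m =>
      if (S m).Nonempty then min (α m) (Δ / 2) else Δ / 2 with hgdef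
    have hg0 : g 0 = Δ / 2 := by
      simp [hgdef, hS0]
    have hgle : ∀ m, g m ≤ Δ / 2 := by
      intro m
      by_cases h : (S m).Nonempty <;> simp [hgdef, h, min_le_right]
    have hgleα : ∀ m, (S m).Nonempty → g m ≤ α m := by
      intro m h; simp [hgdef, h, min_le_left]
    have hgαle : ∀ m, (S m).Nonempty → ∀ y', y' = x j ∨ y' = x i →
        g m ≤ Metric.infDist y' (S m) := by
      intro m h y' hy'
      refine (hgleα m h).trans ?_
      rcases hy' with rfl | rfl
      · exact min_le_left _ _
      · exact min_le_right _ _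
    have hgN : g N = 0 := by
      have hmem : x j ∈ S N := hxmem j N hj hχj1 (hχmem j).2
      have hne : (S N).Nonempty := ⟨x j, hmem⟩
      have h0 : Metric.infDist (x j) (S N) = 0 := Metric.infDist_zero_of_mem hmem
      have hα0 : α N = 0 := by
        have h1 : α N ≤ 0 := by rw [hαdef]; simpa [h0] using min_le_left (0:ℝ) (Metric.infDist (x i) (S N))
        have h2 : 0 ≤ α N := le_min Metric.infDist_nonneg Metric.infDist_nonneg
        linarith
      simp [hgdef, hne, hα0, min_eq_left, le_of_lt (half_pos hΔpos)]
      exact le_of_lt (half_pos hΔpos)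
    -- pigeonhole
    obtain ⟨m, hmN, hstep⟩ := exists_big_step g N hχj1
    rw [hg0, hgN, sub_zero] at hstep
    have hc_eq : c = (Δ / 2) / N := by
      rw [hcdef]; field_simp
    rw [← hc_eq] at hstep
    -- consequences of the chosen step
    have hgm1_lt : g (m + 1) < Δ / 2 := by
      have := hgle m; linarith
    have hSm1ne : (S (m + 1)).Nonempty := by
      by_contra h
      have : g (m + 1) = Δ / 2 := by simp [hgdef, h]
      linarith
    have hgm1 : g (m + 1) = α (m + 1) := by
      have h1 : g (m + 1) = min (α (m + 1)) (Δ / 2) := by simp [hgdef, hSm1ne]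
      rcases min_cases (α (m + 1)) (Δ / 2) with ⟨he, _⟩ | ⟨he, _⟩
      · rw [h1, he]
      · rw [h1] at hgm1_lt ⊢; rw [he] at hgm1_lt; linarith
    have hαm1_le : α (m + 1) ≤ Δ / 2 - c := by
      have := hgle m; rw [hgm1] at hstep; linarith
    have hαm1_nonneg : 0 ≤ α (m + 1) :=
      le_min Metric.infDist_nonneg Metric.infDist_nonneg
    -- points of S m are far from both x j and x i
    have hfar : ∀ y', (y' = x j ∨ y' = x i) → ∀ p ∈ S m, α (m + 1) + c ≤ dist y' p := by
      intro y' hy' p hp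
      have hSmne : (S m).Nonempty := ⟨p, hp⟩
      have h1 : g m ≤ Metric.infDist y' (S m) := hgαle m hSmne y' hy'
      have h2 : Metric.infDist y' (S m) ≤ dist y' p := Metric.infDist_le_dist_of_mem hp
      rw [hgm1] at hstep
      linarith
    -- S (m+1) is finite, so the infimum is attained
    have hSfin : (S (m + 1)).Finite := by
      rw [hS (m + 1) (Nat.le_add_left 1 m)]
      have : {p : X | ∃ k, 1 ≤ k ∧ k ≤ β (m + 1) ∧ p = x k}
          ⊆ x '' (Set.Icc 1 (β (m + 1))) := by
        rintro p ⟨k, hk1, hk2, rfl⟩; exact ⟨k, ⟨hk1, hk2⟩, rfl⟩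
      exact Set.Finite.subset ((Set.finite_Icc _ _).image x) this
    -- main claim
    have key : ∀ y y' : X, dist y y' = Δ → (y' = x j ∨ y' = x i) →
        Metric.infDist y (S (m + 1)) = α (m + 1) →
        ∃ k, 1 ≤ k ∧ c ≤ f y' k - f y k := by
      intro y y' hyy' hy'mem hymin
      obtain ⟨p, hpmem, hpdist⟩ := hSfin.isCompact.exists_infDist_eq_dist hSm1ne y
      have hpmem' := hpmem
      rw [hS (m + 1) (Nat.le_add_left 1 m)] at hpmem'
      obtain ⟨k, hk1, hk2, rfl⟩ := hpmem'
      have hχk : χ k ≤ m + 1 := hχle k (m + 1) (Nat.le_add_left 1 m) hk2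
      have hdistyk : dist y (x k) = α (m + 1) := by rw [← hpdist, hymin]
      refine ⟨k, hk1, ?_⟩
      have hfy : f y k ≤ α (m + 1) := by
        rw [hf y k hk1, ← hdistyk]
        exact Metric.infDist_le_dist_of_mem (Set.mem_union_right _ rfl)
      have hfy' : α (m + 1) + c ≤ f y' k := by
        rw [hf y' k hk1]
        by_contra hcon
        push_neg at hcon
        have hAne : (S (χ k - 1) ∪ {x k}).Nonempty :=
          ⟨x k, Set.mem_union_right _ rfl⟩
        obtain ⟨q, hq, hqlt⟩ := (Metric.infDist_lt_iff hAne).mp hcon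
        rcases hq with hq | hq
        · -- q ∈ S (χ k - 1) ⊆ S m
          have hsub : S (χ k - 1) ⊆ S m := hSsub _ _ (by omega)
          exact absurd hqlt (not_lt.mpr (hfar y' hy'mem q (hsub hq)))
        · -- q = x k
          rw [Set.mem_singleton_iff] at hq
          subst hq
          have htri : dist y y' ≤ dist y (x k) + dist (x k) y' := dist_triangle y (x k) y'
          rw [dist_comm (x k) y'] at htri
          rw [hyy', hdistyk] at htri
          linarith
      linarith
    -- finish by cases on which of the two points attains the min
    rcases le_total (Metric.infDist (x j) (S (m + 1))) (Metric.infDist (x i) (S (m + 1)))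
      with hmin | hmin
    · obtain ⟨k, hk1, hk⟩ := key (x j) (x i) rfl (Or.inr rfl)
        (by rw [hαdef]; exact (min_eq_left hmin).symm)
      refine ⟨k, hk1, ?_⟩
      calc c ≤ f (x i) k - f (x j) k := hk
        _ ≤ |f (x i) k - f (x j) k| := le_abs_self _
        _ = |f (x j) k - f (x i) k| := abs_sub_comm _ _
    · obtain ⟨k, hk1, hk⟩ := key (x i) (x j) (dist_comm (x i) (x j)) (Or.inl rfl)
        (by rw [hαdef]; exact (min_eq_right hmin).symm)
      exact ⟨k, hk1, hk.trans (le_abs_self _)⟩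
  · -- (c) support
    intro j j' hj _ hj' hχlt
    rw [hf (x j) j' hj']
    have h1 : 1 ≤ χ j' - 1 := by have := (hχmem j).1; omega
    have h2 : χ j ≤ χ j' - 1 := by omega
    have hmem : x j ∈ S (χ j' - 1) :=
      hxmem j (χ j' - 1) hj h1 ((hχmem j).2.trans (hβmono h2))
    exact Metric.infDist_zero_of_mem (Set.mem_union_left _ hmem)
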